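/- In the common knowledge semantics of ATL*, the common knowledge operator is definable: (G, h) ⊨_ck C_A φ if and only if (G, h) ⊨_ck ⟨⟨A⟩⟩ (φ U φ). -/

import Mathlib

/-- A concurrent game structure with imperfect information (iCGS). -/
structure iCGS (Ag S Act AP : Type) where
  init : S
  obs : Ag → S → S → Prop
  obsEquiv : ∀ i, Equivalence (obs i)
  protocol : Ag → S → Set Act
  protNe : ∀ i s, (protocol i s).Nonempty
  protObs : ∀ i s s', obs i s s' → protocol i s = protocol i s'
  trans : S → (Ag → Act) → S → Prop
  transSerial : ∀ s α, (∀ i, α i ∈ protocol i s) → ∃ s', trans s α s'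
  label : S → Set AP

/-- A history: an initial state followed by a finite list of (joint action, state) steps. -/
structure Hist (Ag S Act : Type) where
  start : S
  steps : List ((Ag → Act) × S)

variable {Ag S Act AP S' Act' : Type}

/-- The last state of a history. -/
def histLast (h : Hist Ag S Act) : S :=
  (h.steps.getLast?.map Prod.snd).getD h.start

/-- Synchronous extension of agent `i`'s indistinguishability relation to histories:
same length (enforced by `Forall₂`), pointwise indistinguishable states, and the
same actions of agent `i` at every step. -/
def indist (G : iCGS Ag S Act AP) (i : Ag) (h h' : Hist Ag S Act) : Prop :=
  G.obs i h.start h'.start ∧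
    List.Forall₂ (fun p q => p.1 i = q.1 i ∧ G.obs i p.2 q.2) h.steps h'.steps
/-- The common knowledge relation of a coalition `A`: transitive closure of the
union of the individual indistinguishability relations. -/
def ckRel (G : iCGS Ag S Act AP) (A : Set Ag) :
    Hist Ag S Act → Hist Ag S Act → Prop :=
  Relation.TransGen (fun h h' => ∃ i ∈ A, indist G i h h')

/-- The common knowledge neighbourhood of a history `h` for coalition `A`. -/
def CKN (G : iCGS Ag S Act AP) (A : Set Ag) (h : Hist Ag S Act) :
    Set (Hist Ag S Act) :=
  { h' | ckRel G A h' h }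
/-- An infinite path: a start state and an infinite sequence of (joint action, state) steps. -/
structure GPath (Ag S Act : Type) where
  start : S
  steps : ℕ → (Ag → Act) × S

/-- The prefix of a path of length `j` (i.e. with `j` steps), as a history. -/
def pathPrefix (lam : GPath Ag S Act) (j : ℕ) : Hist Ag S Act :=
  ⟨lam.start, (List.range j).map lam.steps⟩

/-- A (joint) uniform memoryful strategy for coalition `A`: each agent of `A` plays
enabled actions and acts identically on indistinguishable histories. -/
def IsUniformStrat (G : iCGS Ag S Act AP) (A : Set Ag)
    (σ : Ag → Hist Ag S Act → Act) : Prop :=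
  ∀ i ∈ A, (∀ h, σ i h ∈ G.protocol i (histLast h)) ∧
    ∀ h h', indist G i h h' → σ i h = σ i h'

/-- Objective outcomes of strategy `σ` (for coalition `A`) at history `h`. -/
def outObj (G : iCGS Ag S Act AP) (A : Set Ag) (h : Hist Ag S Act)
    (σ : Ag → Hist Ag S Act → Act) : Set (GPath Ag S Act) :=
  { lam | pathPrefix lam h.steps.length = h ∧
      ∀ j, h.steps.length ≤ j →
        (∀ i ∈ A, (lam.steps j).1 i = σ i (pathPrefix lam j)) ∧
        G.trans (histLast (pathPrefix lam j)) (lam.steps j).1 (lam.steps j).2 }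

/-- Subjective outcomes of strategy `σ` at history `h`. -/
def outSubj (G : iCGS Ag S Act AP) (A : Set Ag) (h : Hist Ag S Act)
    (σ : Ag → Hist Ag S Act → Act) : Set (GPath Ag S Act) :=
  { lam | ∃ i ∈ A, ∃ h', indist G i h' h ∧ lam ∈ outObj G A h' σ }

/-- Common knowledge outcomes of strategy `σ` at history `h`. -/
def outCk (G : iCGS Ag S Act AP) (A : Set Ag) (h : Hist Ag S Act)
    (σ : Ag → Hist Ag S Act → Act) : Set (GPath Ag S Act) :=
  { lam | ∃ h' ∈ CKN G A h, lam ∈ outObj G A h' σ }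
mutual
/-- History formulas of ATL*. -/
inductive HForm (AP Ag : Type) : Type
  | atom : AP → HForm AP Ag
  | neg : HForm AP Ag → HForm AP Ag
  | imp : HForm AP Ag → HForm AP Ag → HForm AP Ag
  | coal : Set Ag → PForm AP Ag → HForm AP Ag

/-- Path formulas of ATL*. -/
inductive PForm (AP Ag : Type) : Type
  | hist : HForm AP Ag → PForm AP Ag
  | neg : PForm AP Ag → PForm AP Ag
  | imp : PForm AP Ag → PForm AP Ag → PForm AP Ag
  | next : PForm AP Ag → PForm AP Ag
  | yest : PForm AP Ag → PForm AP Ag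
  | until : PForm AP Ag → PForm AP Ag → PForm AP Ag
end

mutual
/-- Common knowledge satisfaction of history formulas. -/
def satH (G : iCGS Ag S Act AP) : Hist Ag S Act → HForm AP Ag → Prop
  | h, .atom p => p ∈ G.label (histLast h)
  | h, .neg φ => ¬ satH G h φ
  | h, .imp φ ψ => satH G h φ → satH G h ψ
  | h, .coal A ψ => ∃ σ, IsUniformStrat G A σ ∧
      ∀ lam ∈ outCk G A h σ, satP G lam h.steps.length ψ

/-- Common knowledge satisfaction of path formulas. -/
def satP (G : iCGS Ag S Act AP) : GPath Ag S Act → ℕ → PForm AP Ag → Prop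
  | lam, m, .hist φ => satH G (pathPrefix lam m) φ
  | lam, m, .neg ψ => ¬ satP G lam m ψ
  | lam, m, .imp ψ ψ' => satP G lam m ψ → satP G lam m ψ'
  | lam, m, .next ψ => satP G lam (m + 1) ψ
  | lam, m, .yest ψ => 1 ≤ m ∧ satP G lam (m - 1) ψ
  | lam, m, .until ψ ψ' => ∃ j, m ≤ j ∧ satP G lam j ψ' ∧
      ∀ k, m ≤ k → k < j → satP G lam k ψ
end

mutual
/-- `A`-formulas: history formulas whose only coalition is `A`. -/
def AFormH (A : Set Ag) : HForm AP Ag → Prop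
  | .atom _ => True
  | .neg φ => AFormH A φ
  | .imp φ ψ => AFormH A φ ∧ AFormH A ψ
  | .coal B ψ => B = A ∧ AFormP A ψ

/-- `A`-formulas: path formulas whose only coalition is `A`. -/
def AFormP (A : Set Ag) : PForm AP Ag → Prop
  | .hist φ => AFormH A φ
  | .neg ψ => AFormP A ψ
  | .imp ψ ψ' => AFormP A ψ ∧ AFormP A ψ'
  | .next ψ => AFormP A ψ
  | .yest ψ => AFormP A ψ
  | .until ψ ψ' => AFormP A ψ ∧ AFormP A ψ'
end

private lemma ckRel_length {G : iCGS Ag S Act AP} {A : Set Ag} {g g' : Hist Ag S Act}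
    (h : ckRel G A g g') : g.steps.length = g'.steps.length := by
  induction h with
  | single h => obtain ⟨i, _, hi⟩ := h; exact hi.2.length_eq
  | tail _ h ih => obtain ⟨i, _, hi⟩ := h; exact ih.trans hi.2.length_eq

private lemma lastAux_cons : ∀ (l : List ((Ag → Act) × S)) (p : (Ag → Act) × S) (s : S),
    (((p :: l).getLast?.map Prod.snd).getD s) = ((l.getLast?.map Prod.snd).getD p.2)
  | [], p, s => rfl
  | q :: l, p, s => by
      rw [List.getLast?_cons_cons]
      obtain ⟨x, hx⟩ := Option.isSome_iff_exists.mp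
        (List.getLast?_isSome.mpr (by simp : (q :: l) ≠ []))
      rw [hx]
      rfl

private lemma lastAux_obs (G : iCGS Ag S Act AP) (i : Ag)
    {l l' : List ((Ag → Act) × S)} {s s' : S}
    (hs : G.obs i s s')
    (hf : List.Forall₂ (fun p q => p.1 i = q.1 i ∧ G.obs i p.2 q.2) l l') :
    G.obs i ((l.getLast?.map Prod.snd).getD s) ((l'.getLast?.map Prod.snd).getD s') := by
  induction hf generalizing s s' with
  | nil => exact hs
  | cons hpq _ ih => rw [lastAux_cons, lastAux_cons]; exact ih hpq.2

private lemma indist_histLast {G : iCGS Ag S Act AP} {i : Ag} {g g' : Hist Ag S Act}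
    (h : indist G i g g') : G.obs i (histLast g) (histLast g') :=
  lastAux_obs G i h.1 h.2

private lemma choose_congr {T T' : Set Act} (e : T = T')
    (h1 : T.Nonempty) (h2 : T'.Nonempty) : h1.choose = h2.choose := by
  subst e; rfl

/-- A canonical enabled action. -/
noncomputable def pickAct (G : iCGS Ag S Act AP) (i : Ag) (s : S) : Act :=
  (G.protNe i s).choose

private lemma pickAct_mem (G : iCGS Ag S Act AP) (i : Ag) (s : S) :
    pickAct G i s ∈ G.protocol i s :=
  (G.protNe i s).choose_spec

open Classical in
private lemma stepF_prot (G : iCGS Ag S Act AP) (A : Set Ag)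
    (σ : Ag → Hist Ag S Act → Act)
    (hσ : ∀ i ∈ A, ∀ g, σ i g ∈ G.protocol i (histLast g))
    (g : Hist Ag S Act) :
    ∀ i, (fun i => if i ∈ A then σ i g else pickAct G i (histLast g)) i
      ∈ G.protocol i (histLast g) := by
  intro i
  by_cases hi : i ∈ A
  · simpa [hi] using hσ i hi g
  · simpa [hi] using pickAct_mem G i (histLast g)

open Classical in
/-- One step of the canonical outcome construction. -/
noncomputable def stepF (G : iCGS Ag S Act AP) (A : Set Ag)
    (σ : Ag → Hist Ag S Act → Act)
    (hσ : ∀ i ∈ A, ∀ g, σ i g ∈ G.protocol i (histLast g))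
    (g : Hist Ag S Act) : (Ag → Act) × S :=
  ⟨fun i => if i ∈ A then σ i g else pickAct G i (histLast g),
   (G.transSerial (histLast g) _ (stepF_prot G A σ hσ g)).choose⟩

private lemma stepF_trans (G : iCGS Ag S Act AP) (A : Set Ag)
    (σ : Ag → Hist Ag S Act → Act)
    (hσ : ∀ i ∈ A, ∀ g, σ i g ∈ G.protocol i (histLast g))
    (g : Hist Ag S Act) :
    G.trans (histLast g) (stepF G A σ hσ g).1 (stepF G A σ hσ g).2 :=
  (G.transSerial (histLast g) _ (stepF_prot G A σ hσ g)).choose_spec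

open Classical in
private lemma stepF_act (G : iCGS Ag S Act AP) (A : Set Ag)
    (σ : Ag → Hist Ag S Act → Act)
    (hσ : ∀ i ∈ A, ∀ g, σ i g ∈ G.protocol i (histLast g))
    (g : Hist Ag S Act) {i : Ag} (hi : i ∈ A) :
    (stepF G A σ hσ g).1 i = σ i g := by
  simp [stepF, hi]

/-- The canonical sequence of extended histories. -/
noncomputable def hseq (G : iCGS Ag S Act AP) (A : Set Ag)
    (σ : Ag → Hist Ag S Act → Act)
    (hσ : ∀ i ∈ A, ∀ g, σ i g ∈ G.protocol i (histLast g))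
    (h' : Hist Ag S Act) : ℕ → Hist Ag S Act
  | 0 => h'
  | n + 1 =>
      ⟨(hseq G A σ hσ h' n).start,
       (hseq G A σ hσ h' n).steps ++ [stepF G A σ hσ (hseq G A σ hσ h' n)]⟩

section Canon

variable (G : iCGS Ag S Act AP) (A : Set Ag)
    (σ : Ag → Hist Ag S Act → Act)
    (hσ : ∀ i ∈ A, ∀ g, σ i g ∈ G.protocol i (histLast g))
    (h' : Hist Ag S Act)

private lemma hseq_succ (n : ℕ) :
    hseq G A σ hσ h' (n + 1)
      = ⟨(hseq G A σ hσ h' n).start,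
         (hseq G A σ hσ h' n).steps ++ [stepF G A σ hσ (hseq G A σ hσ h' n)]⟩ := by
  rfl

private lemma hseq_length (n : ℕ) :
    (hseq G A σ hσ h' n).steps.length = h'.steps.length + n := by
  induction n with
  | zero => rfl
  | succ n ih => rw [hseq_succ]; simp [ih]; ring

private lemma hseq_start (n : ℕ) : (hseq G A σ hσ h' n).start = h'.start := by
  induction n with
  | zero => rfl
  | succ n ih => rw [hseq_succ]; exact ih

private lemma hseq_prefix {n m : ℕ} (hnm : n ≤ m) :
    (hseq G A σ hσ h' n).steps <+: (hseq G A σ hσ h' m).steps := by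
  induction m with
  | zero =>
    have : n = 0 := Nat.le_zero.mp hnm
    subst this; exact List.prefix_refl _
  | succ m ih =>
    rcases Nat.le_succ_iff.mp hnm with hle | heq
    · refine (ih hle).trans ⟨[stepF G A σ hσ (hseq G A σ hσ h' m)], ?_⟩
      rw [hseq_succ]
    · subst heq; exact List.prefix_refl _

/-- The canonical default step. -/
noncomputable def dflt : (Ag → Act) × S := ⟨fun i => pickAct G i G.init, G.init⟩

/-- The canonical outcome path extending `h'`. -/
noncomputable def canonPath : GPath Ag S Act :=
  ⟨h'.start, fun j => (hseq G A σ hσ h' (j + 1)).steps.getD j (dflt G)⟩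

private lemma canonPath_steps {n j : ℕ} (hj : j < (hseq G A σ hσ h' n).steps.length) :
    (canonPath G A σ hσ h').steps j = (hseq G A σ hσ h' n).steps.getD j (dflt G) := by
  have hj1 : j < (hseq G A σ hσ h' (j + 1)).steps.length := by
    rw [hseq_length]; omega
  show (hseq G A σ hσ h' (j + 1)).steps.getD j (dflt G) = _
  rcases le_total n (j + 1) with hle | hle
  · rw [List.getD_eq_getElem _ _ hj1, List.getD_eq_getElem _ _ hj,
      (hseq_prefix G A σ hσ h' hle).getElem hj]
  · rw [List.getD_eq_getElem _ _ hj1, List.getD_eq_getElem _ _ hj,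
      (hseq_prefix G A σ hσ h' hle).getElem hj1]

private lemma canonPath_prefix (n : ℕ) :
    pathPrefix (canonPath G A σ hσ h') (h'.steps.length + n) = hseq G A σ hσ h' n := by
  have hlen : ((List.range (h'.steps.length + n)).map (canonPath G A σ hσ h').steps).length
      = (hseq G A σ hσ h' n).steps.length := by simp [hseq_length]
  have hsteps : (List.range (h'.steps.length + n)).map (canonPath G A σ hσ h').steps
      = (hseq G A σ hσ h' n).steps := by
    apply List.ext_getElem hlen
    intro j hj1 hj2
    simp only [List.getElem_map, List.getElem_range]
    rw [canonPath_steps G A σ hσ h' hj2, List.getD_eq_getElem _ _ hj2]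
  show (⟨(canonPath G A σ hσ h').start,
      (List.range (h'.steps.length + n)).map (canonPath G A σ hσ h').steps⟩ : Hist Ag S Act)
    = hseq G A σ hσ h' n
  rw [hsteps]
  show (⟨h'.start, (hseq G A σ hσ h' n).steps⟩ : Hist Ag S Act) = hseq G A σ hσ h' n
  rw [← hseq_start G A σ hσ h' n]

private lemma canonPath_step_eq {j : ℕ} (hj : h'.steps.length ≤ j) :
    (canonPath G A σ hσ h').steps j
      = stepF G A σ hσ (hseq G A σ hσ h' (j - h'.steps.length)) := by
  set n := j - h'.steps.length with hn
  have hjn : j = (hseq G A σ hσ h' n).steps.length := by rw [hseq_length]; omega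
  have hj1 : j < (hseq G A σ hσ h' (n + 1)).steps.length := by rw [hseq_length]; omega
  rw [canonPath_steps G A σ hσ h' hj1, List.getD_eq_getElem _ _ hj1]
  rw [List.getElem_of_eq (congrArg Hist.steps (hseq_succ G A σ hσ h' n)) hj1]
  exact List.getElem_concat_length hjn _

private lemma canonPath_mem : canonPath G A σ hσ h' ∈ outObj G A h' σ := by
  constructor
  · have := canonPath_prefix G A σ hσ h' 0
    rwa [Nat.add_zero] at this
  · intro j hj
    have hpre : pathPrefix (canonPath G A σ hσ h') j
        = hseq G A σ hσ h' (j - h'.steps.length) := by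
      have : j = h'.steps.length + (j - h'.steps.length) := by omega
      rw [this, canonPath_prefix]
      congr 1
      omega
    constructor
    · intro i hi
      rw [canonPath_step_eq G A σ hσ h' hj, hpre]
      exact stepF_act G A σ hσ _ hi
    · rw [canonPath_step_eq G A σ hσ h' hj, hpre]
      exact stepF_trans G A σ hσ _

end Canon

private lemma outObj_nonempty (G : iCGS Ag S Act AP) (A : Set Ag)
    (σ : Ag → Hist Ag S Act → Act)
    (hσ : ∀ i ∈ A, ∀ g, σ i g ∈ G.protocol i (histLast g))
    (h' : Hist Ag S Act) : (outObj G A h' σ).Nonempty :=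
  ⟨canonPath G A σ hσ h', canonPath_mem G A σ hσ h'⟩

/-- in the common knowledge semantics, the common knowledge
operator `C_A` is definable: `C_A φ` holds at `h` iff `⟨⟨A⟩⟩ (φ U φ)` does. -/
theorem common_knowledge_definable (G : iCGS Ag S Act AP) (A : Set Ag)
    (h : Hist Ag S Act) (φ : HForm AP Ag) :
    (∀ h' ∈ CKN G A h, satH G h' φ) ↔
      satH G h (HForm.coal A (PForm.until (PForm.hist φ) (PForm.hist φ))) := by
  constructor
  · intro hC
    show ∃ σ, IsUniformStrat G A σ ∧
      ∀ lam ∈ outCk G A h σ, satP G lam h.steps.length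
        (PForm.until (PForm.hist φ) (PForm.hist φ))
    refine ⟨fun i g => pickAct G i (histLast g), ?_, ?_⟩
    · intro i _
      refine ⟨fun g => pickAct_mem G i (histLast g), fun g g' hgg' => ?_⟩
      exact choose_congr (G.protObs i _ _ (indist_histLast hgg')) _ _
    · rintro lam ⟨h', hck, hobj⟩
      have hlen : h'.steps.length = h.steps.length := ckRel_length hck
      have hpre : pathPrefix lam h.steps.length = h' := by
        rw [← hlen]; exact hobj.1
      refine ⟨h.steps.length, le_rfl, ?_, fun k hk hk' => absurd (lt_of_le_of_lt hk hk') (lt_irrefl _)⟩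
      show satH G (pathPrefix lam h.steps.length) φ
      rw [hpre]
      exact hC h' hck
  · rintro ⟨σ, hσu, hσ⟩ h' hck
    have hprot : ∀ i ∈ A, ∀ g, σ i g ∈ G.protocol i (histLast g) :=
      fun i hi g => (hσu i hi).1 g
    obtain ⟨lam, hlam⟩ := outObj_nonempty G A σ hprot h'
    have hck' : lam ∈ outCk G A h σ := ⟨h', hck, hlam⟩
    have hlen : h'.steps.length = h.steps.length := ckRel_length hck
    obtain ⟨j, hj, hj2, hall⟩ := hσ lam hck'
    have hφm : satP G lam h.steps.length (PForm.hist φ) := by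
      rcases eq_or_lt_of_le hj with heq | hlt
      · rw [heq]; exact hj2
      · exact hall h.steps.length le_rfl hlt
    have : satH G (pathPrefix lam h.steps.length) φ := hφm
    rwa [← hlen, hlam.1] at this
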